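/- Let f : ℝ → ℝ, α > 0, β > 0, p > 1, and a, b ∈ ℝ. If |f| is α,β-symmetric integrable on [a,b], then |f|^p is also α,β-symmetric integrable on [a,b]. -/

import Mathlib

/-- The α-forward integral (Nörlund sum) of `f` from `a` to `b`:
`∫_a^b f(t) Δ_α t = α·∑_{k=0}^∞ f(a+kα) − α·∑_{k=0}^∞ f(b+kα)`. -/
noncomputable def deltaInt (α : ℝ) (f : ℝ → ℝ) (a b : ℝ) : ℝ :=
  α * ∑' k : ℕ, f (a + k * α) - α * ∑' k : ℕ, f (b + k * α)

/-- `f` is α-forward integrable on `[a,b]`: both defining series converge. -/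
def ForwardIntegrable (α : ℝ) (f : ℝ → ℝ) (a b : ℝ) : Prop :=
  Summable (fun k : ℕ => f (a + k * α)) ∧ Summable (fun k : ℕ => f (b + k * α))

/-- The β-backward integral of `f` from `a` to `b`:
`∫_a^b f(t) ∇_β t = β·∑_{k=0}^∞ f(b−kβ) − β·∑_{k=0}^∞ f(a−kβ)`. -/
noncomputable def nablaInt (β : ℝ) (f : ℝ → ℝ) (a b : ℝ) : ℝ :=
  β * ∑' k : ℕ, f (b - k * β) - β * ∑' k : ℕ, f (a - k * β)

/-- `f` is β-backward integrable on `[a,b]`: both defining series converge. -/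
def BackwardIntegrable (β : ℝ) (f : ℝ → ℝ) (a b : ℝ) : Prop :=
  Summable (fun k : ℕ => f (a - k * β)) ∧ Summable (fun k : ℕ => f (b - k * β))

/-- `f` is α,β-symmetric integrable on `[a,b]`. -/
def SymIntegrable (α β : ℝ) (f : ℝ → ℝ) (a b : ℝ) : Prop :=
  ForwardIntegrable α f a b ∧ BackwardIntegrable β f a b

/-- The α,β-symmetric integral of `f` from `a` to `b`. -/
noncomputable def symInt (α β : ℝ) (f : ℝ → ℝ) (a b : ℝ) : ℝ :=
  (α / (α + β)) * deltaInt α f a b + (β / (α + β)) * nablaInt β f a b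

private lemma aux_summable_rpow (g : ℕ → ℝ) (p : ℝ) (hp : 1 < p)
    (hg : Summable fun k => |g k|) : Summable fun k => |g k| ^ p := by
  have h0 : Filter.Tendsto (fun k => |g k|) Filter.atTop (nhds 0) :=
    hg.tendsto_atTop_zero
  have h1 : ∀ᶠ k in Filter.atTop, |g k| ≤ 1 := by
    have := h0.eventually (eventually_le_nhds (by norm_num : (0:ℝ) < 1))
    exact this
  apply Summable.of_norm_bounded_eventually_nat (g := fun k => |g k|) hg
  filter_upwards [h1] with k hk
  have hnn : (0:ℝ) ≤ |g k| := abs_nonneg _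
  rw [Real.norm_eq_abs, abs_of_nonneg (Real.rpow_nonneg hnn p)]
  calc |g k| ^ p ≤ |g k| ^ (1:ℝ) :=
        Real.rpow_le_rpow_of_exponent_ge' hnn hk (by norm_num) (le_of_lt hp)
    _ = |g k| := Real.rpow_one _

theorem sym_integrable_abs_rpow (f : ℝ → ℝ) (α β p : ℝ) (hα : 0 < α) (hβ : 0 < β)
    (hp : 1 < p) (a b : ℝ) (hf : SymIntegrable α β (fun t => |f t|) a b) :
    SymIntegrable α β (fun t => |f t| ^ p) a b := by
  obtain ⟨⟨h1, h2⟩, ⟨h3, h4⟩⟩ := hf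
  refine ⟨⟨?_, ?_⟩, ⟨?_, ?_⟩⟩
  · simpa using aux_summable_rpow (fun k : ℕ => f (a + k * α)) p hp (by simpa using h1)
  · simpa using aux_summable_rpow (fun k : ℕ => f (b + k * α)) p hp (by simpa using h2)
  · simpa using aux_summable_rpow (fun k : ℕ => f (a - k * β)) p hp (by simpa using h3)
  · simpa using aux_summable_rpow (fun k : ℕ => f (b - k * β)) p hp (by simpa using h4)
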